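/- Let u : ℝⁿ → ℝ be C¹ (n ≥ 1). Then the function r ↦ I(r) is differentiable on (0,∞) and I'(r) = 2 D(r)/r for every r > 0. Consequently, at every r > 0 where I(r) > 0, one has (log I)'(r) = 2 U(r)/r. -/

import Mathlib

open Filter Set MeasureTheory
open scoped RealInnerProductSpace

/-- The Hessian of `u` at `x`, as the derivative of the gradient. -/
noncomputable def hess {m : ℕ} (u : EuclideanSpace ℝ (Fin m) → ℝ)
    (x : EuclideanSpace ℝ (Fin m)) :
    EuclideanSpace ℝ (Fin m) →L[ℝ] EuclideanSpace ℝ (Fin m) :=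
  fderiv ℝ (gradient u) x

/-- The Laplacian of `u` at `x`, as the trace of the Hessian. -/
noncomputable def lap {m : ℕ} (u : EuclideanSpace ℝ (Fin m) → ℝ)
    (x : EuclideanSpace ℝ (Fin m)) : ℝ :=
  LinearMap.trace ℝ _ (hess u x : EuclideanSpace ℝ (Fin m) →ₗ[ℝ] EuclideanSpace ℝ (Fin m))

/-- The drift Laplacian `ℒ v = Δv − ⟨x, ∇v⟩/2` on `ℝᵐ`. -/
noncomputable def driftL {m : ℕ} (v : EuclideanSpace ℝ (Fin m) → ℝ)
    (x : EuclideanSpace ℝ (Fin m)) : ℝ :=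
  lap v x - ⟪x, gradient v x⟫ / 2

/-- The surface integral `∫_{∂B_r} g dσ` over the sphere of radius `r > 0` centered at the
origin of `ℝᵐ`, expressed by scaling the canonical surface measure (`volume.toSphere`)
of the unit sphere: `∫_{∂B_r} g dσ = r^{m−1} ∫_{∂B_1} g(rω) dσ₁(ω)`. -/
noncomputable def sphereIntegral {m : ℕ} (g : EuclideanSpace ℝ (Fin m) → ℝ) (r : ℝ) : ℝ :=
  r ^ ((m : ℤ) - 1) * ∫ ω : Metric.sphere (0 : EuclideanSpace ℝ (Fin m)) 1,
    g (r • (ω : EuclideanSpace ℝ (Fin m)))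
      ∂(volume : Measure (EuclideanSpace ℝ (Fin m))).toSphere

/-- The radial derivative `∂_r u (x) = ⟨∇u(x), x/|x|⟩`. -/
noncomputable def radialDeriv {m : ℕ} (u : EuclideanSpace ℝ (Fin m) → ℝ)
    (x : EuclideanSpace ℝ (Fin m)) : ℝ :=
  ⟪gradient u x, ‖x‖⁻¹ • x⟫

/-- `I(r) = r^{1−m} ∫_{∂B_r} u² dσ`. -/
noncomputable def freqI {m : ℕ} (u : EuclideanSpace ℝ (Fin m) → ℝ) (r : ℝ) : ℝ :=
  r ^ (1 - (m : ℤ)) * sphereIntegral (fun x => u x ^ 2) r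

/-- `D(r) = r^{2−m} ∫_{∂B_r} u ∂_r u dσ`. -/
noncomputable def freqD {m : ℕ} (u : EuclideanSpace ℝ (Fin m) → ℝ) (r : ℝ) : ℝ :=
  r ^ (2 - (m : ℤ)) * sphereIntegral (fun x => u x * radialDeriv u x) r

/-- `I` is differentiable on `(0,∞)` with `I'(r) = 2 D(r)/r`; consequently
`(log I)'(r) = 2 U(r)/r` wherever `I(r) > 0`. -/
theorem freqI_hasDerivAt
    {n : ℕ} (hn : 1 ≤ n)
    (u : EuclideanSpace ℝ (Fin n) → ℝ) (hu : ContDiff ℝ 1 u) :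
    (∀ r : ℝ, 0 < r → HasDerivAt (freqI u) (2 * freqD u r / r) r) ∧
    (∀ r : ℝ, 0 < r → 0 < freqI u r →
      HasDerivAt (fun ρ => Real.log (freqI u ρ)) (2 * (freqD u r / freqI u r) / r) r) := by
  have hud : Differentiable ℝ u := hu.differentiable one_ne_zero
  have hcf : Continuous (fderiv ℝ u) := hu.continuous_fderiv one_ne_zero
  have hgrad : ∀ (x v : EuclideanSpace ℝ (Fin n)), ⟪gradient u x, v⟫ = fderiv ℝ u x v := by
    intro x v; rw [gradient]; exact InnerProductSpace.toDual_symm_apply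
  have main : ∀ r : ℝ, 0 < r → HasDerivAt (freqI u) (2 * freqD u r / r) r := by
    intro r hr
    set μ := (volume : Measure (EuclideanSpace ℝ (Fin n))).toSphere with hμ
    set F : ℝ → Metric.sphere (0 : EuclideanSpace ℝ (Fin n)) 1 → ℝ :=
      fun ρ ω => u (ρ • (ω : EuclideanSpace ℝ (Fin n))) ^ 2 with hFdef
    set F' : ℝ → Metric.sphere (0 : EuclideanSpace ℝ (Fin n)) 1 → ℝ := fun ρ ω =>
      2 * u (ρ • (ω : EuclideanSpace ℝ (Fin n))) *
        fderiv ℝ u (ρ • (ω : EuclideanSpace ℝ (Fin n))) (ω : EuclideanSpace ℝ (Fin n))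
      with hF'def
    have hωnorm : ∀ ω : Metric.sphere (0 : EuclideanSpace ℝ (Fin n)) 1,
        ‖(ω : EuclideanSpace ℝ (Fin n))‖ = 1 := fun ω => mem_sphere_zero_iff_norm.mp ω.2
    have hderiv : ∀ (ρ : ℝ) (ω : Metric.sphere (0 : EuclideanSpace ℝ (Fin n)) 1),
        HasDerivAt (fun ρ' => F ρ' ω) (F' ρ ω) ρ := by
      intro ρ ω
      have h1 : HasDerivAt (fun ρ' : ℝ => ρ' • (ω : EuclideanSpace ℝ (Fin n)))
          (ω : EuclideanSpace ℝ (Fin n)) ρ := by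
        simpa using (hasDerivAt_id ρ).smul_const (ω : EuclideanSpace ℝ (Fin n))
      have h2 : HasDerivAt (fun ρ' => u (ρ' • (ω : EuclideanSpace ℝ (Fin n))))
          (fderiv ℝ u (ρ • (ω : EuclideanSpace ℝ (Fin n))) (ω : EuclideanSpace ℝ (Fin n))) ρ :=
        (hud _).hasFDerivAt.comp_hasDerivAt ρ h1
      simpa [hF'def, mul_comm, mul_assoc, mul_left_comm] using h2.fun_pow 2
    have hFcont : ∀ ρ : ℝ, Continuous (F ρ) := fun ρ =>
      (hu.continuous.comp (continuous_const.fun_smul continuous_subtype_val)).fun_pow 2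
    have hF'cont : Continuous (F' r) := by
      have h1 : Continuous fun ω : Metric.sphere (0 : EuclideanSpace ℝ (Fin n)) 1 =>
          r • (ω : EuclideanSpace ℝ (Fin n)) :=
        continuous_const.fun_smul continuous_subtype_val
      exact ((continuous_const.mul (hu.continuous.comp h1)).mul
        ((hcf.comp h1).clm_apply continuous_subtype_val))
    have hgc : Continuous fun x : EuclideanSpace ℝ (Fin n) =>
        2 * |u x| * ‖fderiv ℝ u x‖ :=
      (continuous_const.mul hu.continuous.abs).mul hcf.norm
    obtain ⟨C, hC⟩ := (isCompact_closedBall (0 : EuclideanSpace ℝ (Fin n)) (2 * r)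
      ).exists_bound_of_continuousOn hgc.continuousOn
    obtain ⟨C₂, hC₂⟩ := (isCompact_closedBall (0 : EuclideanSpace ℝ (Fin n)) (2 * r)
      ).exists_bound_of_continuousOn (hu.continuous.pow 2).continuousOn
    have hmem : ∀ (ρ : ℝ), ρ ∈ Metric.ball r r →
        ∀ ω : Metric.sphere (0 : EuclideanSpace ℝ (Fin n)) 1,
        ρ • (ω : EuclideanSpace ℝ (Fin n)) ∈
          Metric.closedBall (0 : EuclideanSpace ℝ (Fin n)) (2 * r) := by
      intro ρ hρ ω
      rw [Metric.mem_ball, Real.dist_eq] at hρ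
      rw [Metric.mem_closedBall, dist_zero_right, norm_smul, hωnorm, mul_one,
        Real.norm_eq_abs]
      have := abs_lt.mp hρ
      rw [abs_le]; constructor <;> nlinarith
    have hInt : Integrable (F r) μ := by
      refine Integrable.mono' (integrable_const C₂) (hFcont r).aestronglyMeasurable
        (Eventually.of_forall fun ω => ?_)
      have := hC₂ _ (hmem r (Metric.mem_ball_self hr) ω)
      simpa [hFdef] using this
    have hbnd : ∀ᵐ ω ∂μ, ∀ ρ ∈ Metric.ball r r, ‖F' ρ ω‖ ≤ C := by
      refine Eventually.of_forall fun ω ρ hρ => ?_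
      set x := ρ • (ω : EuclideanSpace ℝ (Fin n)) with hx
      have h1 := hC x (hmem ρ hρ ω)
      rw [Real.norm_eq_abs] at h1
      have h2 : |fderiv ℝ u x (ω : EuclideanSpace ℝ (Fin n))| ≤ ‖fderiv ℝ u x‖ := by
        simpa [hωnorm ω] using (fderiv ℝ u x).le_opNorm (ω : EuclideanSpace ℝ (Fin n))
      have h3 : ‖F' ρ ω‖ = |2 * u x * fderiv ℝ u x (ω : EuclideanSpace ℝ (Fin n))| := rfl
      rw [h3, abs_mul, abs_mul, abs_two]
      refine le_trans ?_ (le_trans (le_abs_self _) h1)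
      gcongr
    obtain ⟨-, hD⟩ := hasDerivAt_integral_of_dominated_loc_of_deriv_le (μ := μ)
      (F := F) (F' := F') (bound := fun _ => C) (Metric.ball_mem_nhds r hr)
      (Eventually.of_forall fun ρ => (hFcont ρ).aestronglyMeasurable)
      hInt hF'cont.aestronglyMeasurable hbnd (integrable_const C)
      (Eventually.of_forall fun ω ρ hρ => hderiv ρ ω)
    have hval : ∫ ω, F' r ω ∂μ = 2 * freqD u r / r := by
      have hrad : ∀ ω : Metric.sphere (0 : EuclideanSpace ℝ (Fin n)) 1,
          radialDeriv u (r • (ω : EuclideanSpace ℝ (Fin n))) =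
          fderiv ℝ u (r • (ω : EuclideanSpace ℝ (Fin n))) (ω : EuclideanSpace ℝ (Fin n)) := by
        intro ω
        have hnrm : ‖r • (ω : EuclideanSpace ℝ (Fin n))‖ = r := by
          rw [norm_smul, hωnorm, mul_one, Real.norm_eq_abs, abs_of_pos hr]
        rw [radialDeriv, hnrm, smul_smul, inv_mul_cancel₀ (ne_of_gt hr), one_smul, hgrad]
      have hDval : freqD u r = r * ∫ ω : Metric.sphere (0 : EuclideanSpace ℝ (Fin n)) 1,
          u (r • (ω : EuclideanSpace ℝ (Fin n))) *
            radialDeriv u (r • (ω : EuclideanSpace ℝ (Fin n))) ∂μ := by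
        rw [freqD, sphereIntegral, ← mul_assoc, ← zpow_add₀ (ne_of_gt hr)]
        norm_num
        exact Or.inl rfl
      rw [hDval, mul_div_assoc, mul_div_cancel_left₀ _ (ne_of_gt hr), ← integral_const_mul]
      congr 1
      funext ω
      rw [hrad ω]
      ring
    rw [hval] at hD
    refine hD.congr_of_eventuallyEq ?_
    filter_upwards [isOpen_Ioi.mem_nhds hr] with ρ (hρ : 0 < ρ)
    rw [freqI, sphereIntegral, ← mul_assoc, ← zpow_add₀ (ne_of_gt hρ)]
    norm_num
    rfl
  refine ⟨main, fun r hr hI => ?_⟩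
  have h2 := (Real.hasDerivAt_log (ne_of_gt hI)).comp r (main r hr)
  exact h2.congr_deriv (by ring)
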